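/- Suppose γ₁ ≥ 1 (so that also γ₂ = γ₁·exp(1/ℓ_y) ≥ 1). Let x_T, y : [0,∞) → ℝ² be differentiable trajectories and w_T : [0,∞) → ℝ² a continuous function such that for all t ≥ 0: x_T(t) ≠ y(t), e_y(t) = K₁·x_T(t) − y(t) ≠ 0, ẋ_T(t) = f_y(x_T(t), y(t)) + w_T(t), and ẏ(t) = u_y(t) with the feedback controller u_y = γ·(e_y/‖e_y‖)·(K₁ + ‖x_T‖)·‖w_T‖ + γ·(e_y/‖e_y‖)·(‖x_T‖² + ‖x_T‖·‖y‖ + K₁·‖x_T−y‖)/‖x_T−y‖², where γ = γ₁ if ‖x_T−y‖ > ℓ_y and γ = γ₂ if ‖x_T−y‖ ≤ ℓ_y. Then the Lyapunov function V(t) = (1/2)·‖x_T(t)‖² + ‖e_y(t)‖ is nonincreasing in t; in particular, for any constant c > 0, if V(0) ≤ c then V(t) ≤ c for all t ≥ 0, i.e., the sublevel set {V ≤ c} is forward invariant under the feedback controller. -/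

import Mathlib

open scoped RealInnerProductSpace

noncomputable section

/-- The plane ℝ². -/
abbrev E2 : Type := EuclideanSpace ℝ (Fin 2)

/-- Attraction function `φ_a(x) = -m_a x`. -/
def phiA (ma : ℝ) (v : E2) : E2 := (-ma) • v

/-- Bounded repulsion function `φ_b` (with `M_b = m_b / ℓ_b`). -/
def phiB (mb lb : ℝ) (v : E2) : E2 :=
  if lb < ‖v‖ then (mb / ‖v‖ ^ 2) • v else ((mb / lb) / ‖v‖) • v

/-- The function `g` with `g(0) = 0` and `g(d) = exp(-1/d)` for `d ≠ 0`. -/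
def gfun (d : ℝ) : ℝ := if d = 0 then 0 else Real.exp (-(1 / d))

/- Shepherd-to-sheep force `f_y` (with `γ₂ = γ₁ exp(1/ℓ_y)`), `f_y(y, y) = 0`. -/
open Classical in
def fy (γ1 ly : ℝ) (x y : E2) : E2 :=
  if x = y then 0
  else if ly < ‖x - y‖ then (γ1 / ‖x - y‖ ^ 2) • (x - y)
  else (γ1 * Real.exp (1 / ly) * gfun ‖x - y‖ / ‖x - y‖ ^ 2) • (x - y)

/- The switching gain `γ(x_T, y)`: `γ₁` if `‖x_T - y‖ > ℓ_y`, else `γ₂ = γ₁ exp(1/ℓ_y)`. -/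
def gainγ (γ1 ly : ℝ) (xT y : E2) : ℝ :=
  if ly < ‖xT - y‖ then γ1 else γ1 * Real.exp (1 / ly)

/- The feedback controller
`u_y = γ (e_y/‖e_y‖)(K₁ + ‖x_T‖)‖w_T‖
      + γ (e_y/‖e_y‖)(‖x_T‖² + ‖x_T‖‖y‖ + K₁‖x_T - y‖)/‖x_T - y‖²`,
where `e_y = K₁ x_T - y`. -/
def uy (γ1 ly K1 : ℝ) (xT y wT : E2) : E2 :=
  (gainγ γ1 ly xT y * ((K1 + ‖xT‖) * ‖wT‖) / ‖K1 • xT - y‖) • (K1 • xT - y) +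
    (gainγ γ1 ly xT y *
        ((‖xT‖ ^ 2 + ‖xT‖ * ‖y‖ + K1 * ‖xT - y‖) / ‖xT - y‖ ^ 2) / ‖K1 • xT - y‖) •
      (K1 • xT - y)

/-- Derivative of the norm of a nonvanishing differentiable curve. -/
lemma hasDerivWithinAt_norm_of_ne {f : ℝ → E2} {f' : E2} {s : Set ℝ} {x : ℝ}
    (hf : HasDerivWithinAt f f' s x) (h0 : f x ≠ 0) :
    HasDerivWithinAt (fun t => ‖f t‖) (⟪f x, f'⟫ / ‖f x‖) s x := by
  have hn : (0:ℝ) < ‖f x‖ := norm_pos_iff.mpr h0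
  have h1 : (‖f x‖ ^ 2 : ℝ) ≠ 0 := by positivity
  have h2 := (hf.norm_sq).sqrt h1
  have heq : (fun t => Real.sqrt (‖f t‖ ^ 2)) = fun t => ‖f t‖ := by
    funext t; exact Real.sqrt_sq (norm_nonneg _)
  have h3 : HasDerivWithinAt (fun t => ‖f t‖)
      (2 * ⟪f x, f'⟫ / (2 * Real.sqrt (‖f x‖ ^ 2))) s x := heq ▸ h2
  convert h3 using 1
  rw [Real.sqrt_sq hn.le]
  field_simp

/-- Bound on the magnitude of the force `f_y`. -/
lemma norm_fy_le (γ1 ly : ℝ) (hγ1 : 0 < γ1) (hly : 0 < ly) (x yv : E2) (h : x ≠ yv) :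
    ‖fy γ1 ly x yv‖ ≤ gainγ γ1 ly x yv / ‖x - yv‖ := by
  have hr : (0:ℝ) < ‖x - yv‖ := by
    rw [norm_pos_iff]; exact sub_ne_zero.mpr h
  have hexp : (0:ℝ) < Real.exp (1 / ly) := Real.exp_pos _
  rw [fy, gainγ, if_neg h]
  split_ifs with h2
  · rw [norm_smul, Real.norm_eq_abs, abs_of_pos (by positivity)]
    rw [div_mul_eq_mul_div, sq]
    rw [div_le_div_iff₀ (by positivity) hr]
    ring_nf
    nlinarith [hr]
  · have hg0 : gfun ‖x - yv‖ = Real.exp (-(1 / ‖x - yv‖)) := by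
      rw [gfun, if_neg hr.ne']
    have hg1 : gfun ‖x - yv‖ ≤ 1 := by
      rw [hg0]; exact Real.exp_le_one_iff.mpr (neg_nonpos.mpr (by positivity))
    have hgpos : 0 < gfun ‖x - yv‖ := by rw [hg0]; exact Real.exp_pos _
    rw [norm_smul, Real.norm_eq_abs, abs_of_pos (by positivity)]
    rw [div_mul_eq_mul_div, sq, div_le_div_iff₀ (by positivity) hr]
    nlinarith [mul_le_mul_of_nonneg_left hg1 (show (0:ℝ) ≤ γ1 * Real.exp (1 / ly) * (‖x - yv‖ * ‖x - yv‖) by positivity)]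

set_option maxHeartbeats 1000000 in
/-- The closed-loop derivative of the Lyapunov function is nonpositive. -/
lemma lyap_deriv_nonpos (γ1 ly K1 : ℝ) (hγ1 : 1 ≤ γ1) (hly : 0 < ly) (hK1 : 0 < K1)
    (x yv w : E2) (hxy : x ≠ yv) (he : K1 • x - yv ≠ 0) :
    ⟪x, fy γ1 ly x yv + w⟫ +
      ⟪K1 • x - yv, K1 • (fy γ1 ly x yv + w) - uy γ1 ly K1 x yv w⟫ /
        ‖K1 • x - yv‖ ≤ 0 := by
  have hγ1' : 0 < γ1 := lt_of_lt_of_le one_pos hγ1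
  set γ := gainγ γ1 ly x yv with hγdef
  set F := fy γ1 ly x yv with hFdef
  set e := K1 • x - yv with hedef
  set r := ‖x - yv‖ with hrdef
  set n := ‖e‖ with hndef
  have hr : (0:ℝ) < r := by rw [hrdef, norm_pos_iff]; exact sub_ne_zero.mpr hxy
  have hn : (0:ℝ) < n := by rw [hndef, norm_pos_iff]; exact he
  have hγ : 1 ≤ γ := by
    rw [hγdef, gainγ]
    split_ifs
    · exact hγ1
    · exact le_trans hγ1
        (le_mul_of_one_le_right hγ1'.le (Real.one_le_exp (by positivity)))
  have hγpos : 0 < γ := lt_of_lt_of_le one_pos hγ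
  have hF : ‖F‖ ≤ γ / r := norm_fy_le γ1 ly hγ1' hly x yv hxy
  -- bounds from Cauchy-Schwarz
  have hb1 : ⟪x, F⟫ ≤ ‖x‖ * (γ / r) :=
    (real_inner_le_norm x F).trans (mul_le_mul_of_nonneg_left hF (norm_nonneg x))
  have hb2 : ⟪x, w⟫ ≤ ‖x‖ * ‖w‖ := real_inner_le_norm x w
  have hb3 : ⟪e, F⟫ ≤ n * (γ / r) :=
    (real_inner_le_norm e F).trans (mul_le_mul_of_nonneg_left hF (norm_nonneg e))
  have hb4 : ⟪e, w⟫ ≤ n * ‖w‖ := real_inner_le_norm e w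
  -- inner product with the controller
  have huy : ⟪e, uy γ1 ly K1 x yv w⟫ =
      γ * ((K1 + ‖x‖) * ‖w‖) * n +
        γ * ((‖x‖ ^ 2 + ‖x‖ * ‖yv‖ + K1 * r) / r ^ 2) * n := by
    rw [uy, inner_add_right, real_inner_smul_right, real_inner_smul_right,
      real_inner_self_eq_norm_sq, ← hγdef, ← hedef, ← hrdef, ← hndef]
    field_simp
  have hexp : ⟪e, K1 • (F + w) - uy γ1 ly K1 x yv w⟫ =
      K1 * ⟪e, F⟫ + K1 * ⟪e, w⟫ - ⟪e, uy γ1 ly K1 x yv w⟫ := by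
    rw [inner_sub_right, real_inner_smul_right, inner_add_right]
    ring
  have h5 : ⟪e, K1 • (F + w) - uy γ1 ly K1 x yv w⟫ / n ≤
      K1 * (γ / r) + K1 * ‖w‖ - γ * ((K1 + ‖x‖) * ‖w‖) -
        γ * ((‖x‖ ^ 2 + ‖x‖ * ‖yv‖ + K1 * r) / r ^ 2) := by
    rw [div_le_iff₀ hn, hexp, huy]
    nlinarith [mul_le_mul_of_nonneg_left hb3 hK1.le,
      mul_le_mul_of_nonneg_left hb4 hK1.le]
  have h6 : ⟪x, F + w⟫ = ⟪x, F⟫ + ⟪x, w⟫ := inner_add_right x F w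
  have hB : ‖x‖ * (γ / r) + ‖x‖ * ‖w‖ + (K1 * (γ / r) + K1 * ‖w‖ -
      γ * ((K1 + ‖x‖) * ‖w‖) -
      γ * ((‖x‖ ^ 2 + ‖x‖ * ‖yv‖ + K1 * r) / r ^ 2)) ≤ 0 := by
    have htri : r ≤ ‖x‖ + ‖yv‖ := norm_sub_le x yv
    have hnum : (‖x‖ * γ + K1 * γ) * r + (‖x‖ + K1) * ‖w‖ * r ^ 2 -
        γ * ((K1 + ‖x‖) * ‖w‖) * r ^ 2 -
        γ * (‖x‖ ^ 2 + ‖x‖ * ‖yv‖ + K1 * r) ≤ 0 := by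
      have h1 : 0 ≤ (γ - 1) * ((‖x‖ + K1) * ‖w‖) * r ^ 2 :=
        mul_nonneg (mul_nonneg (sub_nonneg.mpr hγ) (by positivity)) (by positivity)
      have h2 : 0 ≤ γ * ‖x‖ * (‖x‖ + ‖yv‖ - r) := by
        apply mul_nonneg (by positivity); linarith
      nlinarith [h1, h2]
    have heq2 : ‖x‖ * (γ / r) + ‖x‖ * ‖w‖ + (K1 * (γ / r) + K1 * ‖w‖ -
        γ * ((K1 + ‖x‖) * ‖w‖) -
        γ * ((‖x‖ ^ 2 + ‖x‖ * ‖yv‖ + K1 * r) / r ^ 2)) =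
        ((‖x‖ * γ + K1 * γ) * r + (‖x‖ + K1) * ‖w‖ * r ^ 2 -
          γ * ((K1 + ‖x‖) * ‖w‖) * r ^ 2 -
          γ * (‖x‖ ^ 2 + ‖x‖ * ‖yv‖ + K1 * r)) / r ^ 2 := by
      field_simp
      ring
    rw [heq2]
    exact div_nonpos_of_nonpos_of_nonneg hnum (by positivity)
  calc ⟪x, F + w⟫ + ⟪e, K1 • (F + w) - uy γ1 ly K1 x yv w⟫ / n
      ≤ ‖x‖ * (γ / r) + ‖x‖ * ‖w‖ + (K1 * (γ / r) + K1 * ‖w‖ -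
          γ * ((K1 + ‖x‖) * ‖w‖) -
          γ * ((‖x‖ ^ 2 + ‖x‖ * ‖yv‖ + K1 * r) / r ^ 2)) := by
        rw [h6]; linarith [hb1, hb2, h5]
    _ ≤ 0 := hB

/-- along closed-loop trajectories with the feedback controller
`u_y`, the Lyapunov function `V = (1/2)‖x_T‖² + ‖e_y‖` (with `e_y = K₁ x_T - y`)
is nonincreasing on `[0, ∞)`; in particular every sublevel set `{V ≤ c}` is
forward invariant. -/
theorem statement10 (γ1 ly K1 : ℝ) (hγ1 : 1 ≤ γ1) (hly : 0 < ly) (hK1 : 0 < K1)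
    (xT y : ℝ → E2) (wT : ℝ → E2) (hwT : ContinuousOn wT (Set.Ici 0))
    (hne : ∀ t : ℝ, 0 ≤ t → xT t ≠ y t)
    (he : ∀ t : ℝ, 0 ≤ t → K1 • xT t - y t ≠ 0)
    (hxT : ∀ t : ℝ, 0 ≤ t →
      HasDerivWithinAt xT (fy γ1 ly (xT t) (y t) + wT t) (Set.Ici 0) t)
    (hy : ∀ t : ℝ, 0 ≤ t →
      HasDerivWithinAt y (uy γ1 ly K1 (xT t) (y t) (wT t)) (Set.Ici 0) t) :
    AntitoneOn (fun t => (1 / 2) * ‖xT t‖ ^ 2 + ‖K1 • xT t - y t‖) (Set.Ici 0) ∧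
    ∀ c : ℝ, 0 < c →
      (1 / 2) * ‖xT 0‖ ^ 2 + ‖K1 • xT 0 - y 0‖ ≤ c →
      ∀ t : ℝ, 0 ≤ t → (1 / 2) * ‖xT t‖ ^ 2 + ‖K1 • xT t - y t‖ ≤ c := by
  set V : ℝ → ℝ := fun t => (1 / 2) * ‖xT t‖ ^ 2 + ‖K1 • xT t - y t‖ with hVdef
  set V' : ℝ → ℝ := fun t =>
    ⟪xT t, fy γ1 ly (xT t) (y t) + wT t⟫ +
      ⟪K1 • xT t - y t,
        K1 • (fy γ1 ly (xT t) (y t) + wT t) - uy γ1 ly K1 (xT t) (y t) (wT t)⟫ /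
        ‖K1 • xT t - y t‖ with hV'def
  have hasV : ∀ t : ℝ, 0 ≤ t → HasDerivWithinAt V (V' t) (Set.Ici 0) t := by
    intro t ht
    have h1 := ((hxT t ht).norm_sq).const_mul (1 / 2 : ℝ)
    have h2 : HasDerivWithinAt (fun s => K1 • xT s - y s)
        (K1 • (fy γ1 ly (xT t) (y t) + wT t) - uy γ1 ly K1 (xT t) (y t) (wT t))
        (Set.Ici 0) t := ((hxT t ht).const_smul K1).sub (hy t ht)
    have h3 := hasDerivWithinAt_norm_of_ne h2 (he t ht)
    have h4 := h1.add h3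
    refine h4.congr_deriv ?_
    simp only [hV'def]
    ring
  have hAnti : AntitoneOn V (Set.Ici 0) := by
    apply antitoneOn_of_deriv_nonpos (convex_Ici 0)
    · exact fun t ht => (hasV t ht).continuousWithinAt
    · intro t ht
      rw [interior_Ici] at ht
      exact ((hasV t (le_of_lt ht)).hasDerivAt
        (Ici_mem_nhds ht)).differentiableAt.differentiableWithinAt
    · intro t ht
      rw [interior_Ici] at ht
      rw [((hasV t (le_of_lt ht)).hasDerivAt (Ici_mem_nhds ht)).deriv]
      exact lyap_deriv_nonpos γ1 ly K1 hγ1 hly hK1 (xT t) (y t) (wT t)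
        (hne t (le_of_lt ht)) (he t (le_of_lt ht))
  refine ⟨hAnti, fun c _ h0 t ht => ?_⟩
  exact le_trans (hAnti (Set.self_mem_Ici) ht ht) h0

end
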